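/- Let B be an N×N complex matrix admitting lower Green generators p(i), q(j), a(k), p(N−r+1) of order r. Then B is a lower Green matrix of order r, i.e., rank B(k:N, 1:k+r−1) ≤ r for every k = 1,…,N−r. -/

import Mathlib

open Matrix

noncomputable section

/-- `A(i,j) = 0` whenever `i - j > r` (1-based; identical in 0-based `Fin` indexing). -/
def IsLowerBand (N r : ℕ) (A : Matrix (Fin N) (Fin N) ℂ) : Prop :=
  ∀ i j : Fin N, (j : ℕ) + r < (i : ℕ) → A i j = 0

/-- `A(i,j) = 0` whenever `j - i > r`. -/
def IsUpperBand (N r : ℕ) (A : Matrix (Fin N) (Fin N) ℂ) : Prop :=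
  ∀ i j : Fin N, (i : ℕ) + r < (j : ℕ) → A i j = 0

/-- `rank B(k:N, 1:k+r-1) ≤ r` for every `k = 1, …, N-r` (1-based). -/
def IsLowerGreen (N r : ℕ) (B : Matrix (Fin N) (Fin N) ℂ) : Prop :=
  ∀ (k : ℕ) (hk1 : 1 ≤ k) (hk2 : k ≤ N - r),
    (B.submatrix
      (fun i : Fin (N - k + 1) => (⟨k - 1 + (i : ℕ), by have := i.isLt; omega⟩ : Fin N))
      (fun j : Fin (k + r - 1) => (⟨(j : ℕ), by have := j.isLt; omega⟩ : Fin N))).rank ≤ r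

/-- `rank B(1:k+r-1, k:N) ≤ r` for every `k = 1, …, N-r` (1-based). -/
def IsUpperGreen (N r : ℕ) (B : Matrix (Fin N) (Fin N) ℂ) : Prop :=
  ∀ (k : ℕ) (hk1 : 1 ≤ k) (hk2 : k ≤ N - r),
    (B.submatrix
      (fun i : Fin (k + r - 1) => (⟨(i : ℕ), by have := i.isLt; omega⟩ : Fin N))
      (fun j : Fin (N - k + 1) => (⟨k - 1 + (j : ℕ), by have := j.isLt; omega⟩ : Fin N))).rank ≤ r

/-- `a^>_{i,s} = a(i-1) a(i-2) ⋯ a(s+1)`, equal to `I_r` when `s ≥ i - 1`. -/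
def aGT (r : ℕ) (a : ℕ → Matrix (Fin r) (Fin r) ℂ) (i s : ℕ) :
    Matrix (Fin r) (Fin r) ℂ :=
  (((List.range' (s + 1) (i - 1 - s)).reverse).map a).prod

/-- `p(i) ∈ ℂ^{1×r}` (i = 1,…,N−r), `pLast = p(N−r+1) ∈ ℂ^{r×r}`, `q(j) ∈ ℂ^{r×1}`,
`a(k) ∈ ℂ^{r×r}` are lower Green generators of the `N×N` matrix `B`:
`B(i,1:r) = p(i)·a^>_{i,0}`, `B(i,r+s-1) = p(i)·a^>_{i,s-1}·q(s-1)` for `2 ≤ s ≤ i ≤ N-r`,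
and the analogous identities for the last `r` rows `B(N-r+1:N, ·)` with `pLast`. -/
def IsLowerGreenGenerators (N r : ℕ) (hNr : r < N)
    (p : ℕ → Matrix (Fin 1) (Fin r) ℂ) (q : ℕ → Matrix (Fin r) (Fin 1) ℂ)
    (a : ℕ → Matrix (Fin r) (Fin r) ℂ) (pLast : Matrix (Fin r) (Fin r) ℂ)
    (B : Matrix (Fin N) (Fin N) ℂ) : Prop :=
  (∀ (i : ℕ) (hi1 : 1 ≤ i) (hi2 : i ≤ N - r) (j : Fin r),
      B ⟨i - 1, by omega⟩ ⟨(j : ℕ), by have := j.isLt; omega⟩ = (p i * aGT r a i 0) 0 j)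
  ∧ (∀ (i : ℕ) (hi1 : 1 ≤ i) (hi2 : i ≤ N - r) (s : ℕ) (hs1 : 2 ≤ s) (hs2 : s ≤ i),
      B ⟨i - 1, by omega⟩ ⟨r + s - 2, by omega⟩
        = (p i * aGT r a i (s - 1) * q (s - 1)) 0 0)
  ∧ (∀ (t : Fin r) (j : Fin r),
      B ⟨N - r + (t : ℕ), by have := t.isLt; omega⟩ ⟨(j : ℕ), by have := j.isLt; omega⟩
        = (pLast * aGT r a (N - r + 1) 0) t j)
  ∧ (∀ (t : Fin r) (s : ℕ) (hs1 : 2 ≤ s) (hs2 : s ≤ N - r + 1),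
      B ⟨N - r + (t : ℕ), by have := t.isLt; omega⟩ ⟨r + s - 2, by omega⟩
        = (pLast * aGT r a (N - r + 1) (s - 1) * q (s - 1)) t 0)

/-- The embedded factor `I_{k-1} ⊕ M ⊕ I_{N-k-r}` (1-based block position `k`),
i.e. `M` occupies (1-based) rows and columns `k, …, k+r` of an `N×N` identity. -/
def embed (N r k : ℕ) (M : Matrix (Fin (r + 1)) (Fin (r + 1)) ℂ) :
    Matrix (Fin N) (Fin N) ℂ :=
  Matrix.of fun i j =>
    if h : k - 1 ≤ (i : ℕ) ∧ (i : ℕ) < k + r ∧ k - 1 ≤ (j : ℕ) ∧ (j : ℕ) < k + r then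
      M ⟨(i : ℕ) - (k - 1), by omega⟩ ⟨(j : ℕ) - (k - 1), by omega⟩
    else if (i : ℕ) = (j : ℕ) then 1 else 0

/-- The embedded last factor `I_{N-r} ⊕ M`. -/
def embedLast (N r : ℕ) (M : Matrix (Fin r) (Fin r) ℂ) : Matrix (Fin N) (Fin N) ℂ :=
  Matrix.of fun i j =>
    if h : N - r ≤ (i : ℕ) ∧ N - r ≤ (j : ℕ) then
      M ⟨(i : ℕ) - (N - r), by have := i.isLt; omega⟩
        ⟨(j : ℕ) - (N - r), by have := j.isLt; omega⟩
    else if (i : ℕ) = (j : ℕ) then 1 else 0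

/-- `G̃_1 · G̃_2 ⋯ G̃_{N-r}` (increasing order of indices). -/
def prodAsc (N r : ℕ) (G : ℕ → Matrix (Fin (r + 1)) (Fin (r + 1)) ℂ) :
    Matrix (Fin N) (Fin N) ℂ :=
  ((List.range' 1 (N - r)).map (fun k => embed N r k (G k))).prod

/-- `G̃_{N-r} · G̃_{N-r-1} ⋯ G̃_1` (decreasing order of indices). -/
def prodDesc (N r : ℕ) (G : ℕ → Matrix (Fin (r + 1)) (Fin (r + 1)) ℂ) :
    Matrix (Fin N) (Fin N) ℂ :=
  (((List.range' 1 (N - r)).reverse).map (fun k => embed N r k (G k))).prod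

/-- The `1×r` block `p` of the partition `M = [[p, d], [a, q]]`. -/
def blkP (r : ℕ) (M : Matrix (Fin (r + 1)) (Fin (r + 1)) ℂ) : Matrix (Fin 1) (Fin r) ℂ :=
  Matrix.of fun _ j => M 0 j.castSucc

/-- The `1×1` block `d` of the partition `M = [[p, d], [a, q]]`. -/
def blkD (r : ℕ) (M : Matrix (Fin (r + 1)) (Fin (r + 1)) ℂ) : ℂ := M 0 (Fin.last r)

/-- The `r×r` block `a` of the partition `M = [[p, d], [a, q]]`. -/
def blkA (r : ℕ) (M : Matrix (Fin (r + 1)) (Fin (r + 1)) ℂ) : Matrix (Fin r) (Fin r) ℂ :=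
  Matrix.of fun i j => M i.succ j.castSucc

/-- The `r×1` block `q` of the partition `M = [[p, d], [a, q]]`. -/
def blkQ (r : ℕ) (M : Matrix (Fin (r + 1)) (Fin (r + 1)) ℂ) : Matrix (Fin r) (Fin 1) ℂ :=
  Matrix.of fun i _ => M i.succ (Fin.last r)

/-- Assemble the `(r+1)×(r+1)` matrix `[[p, d], [a, q]]` from its blocks. -/
def mkBlk (r : ℕ) (p : Matrix (Fin 1) (Fin r) ℂ) (d : ℂ)
    (a : Matrix (Fin r) (Fin r) ℂ) (q : Matrix (Fin r) (Fin 1) ℂ) :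
    Matrix (Fin (r + 1)) (Fin (r + 1)) ℂ :=
  Matrix.of fun i j =>
    if hi : (i : ℕ) = 0 then
      if hj : (j : ℕ) < r then p 0 ⟨(j : ℕ), hj⟩ else d
    else
      if hj : (j : ℕ) < r then a ⟨(i : ℕ) - 1, by have := i.isLt; omega⟩ ⟨(j : ℕ), hj⟩
      else q ⟨(i : ℕ) - 1, by have := i.isLt; omega⟩ 0

/-- The elementary Gauss factor `[[1, 0_{1×r}], [-f, I_r]]`. -/
def elemL (r : ℕ) (f : Matrix (Fin r) (Fin 1) ℂ) :
    Matrix (Fin (r + 1)) (Fin (r + 1)) ℂ :=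
  Matrix.of fun i j =>
    if hi : (i : ℕ) = 0 then (if (j : ℕ) = 0 then 1 else 0)
    else if hj : (j : ℕ) = 0 then -f ⟨(i : ℕ) - 1, by have := i.isLt; omega⟩ 0
    else if (i : ℕ) = (j : ℕ) then 1 else 0

/-- The elementary factor `[[I_r, 0_{r×1}], [-g, 1]]`. -/
def elemLrow (r : ℕ) (g : Matrix (Fin 1) (Fin r) ℂ) :
    Matrix (Fin (r + 1)) (Fin (r + 1)) ℂ :=
  Matrix.of fun i j =>
    if hi : (i : ℕ) < r then
      (if hj : (j : ℕ) < r then (if (i : ℕ) = (j : ℕ) then 1 else 0) else 0)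
    else if hj : (j : ℕ) < r then -g 0 ⟨(j : ℕ), hj⟩ else 1

/-- All leading principal minors are nonzero. -/
def StronglyRegular (N : ℕ) (A : Matrix (Fin N) (Fin N) ℂ) : Prop :=
  ∀ (k : ℕ) (hk : k ≤ N), 1 ≤ k →
    (A.submatrix (Fin.castLE hk) (Fin.castLE hk)).det ≠ 0

/-- Splitting the product `aGT`. -/
lemma aGT_split (r : ℕ) (a : ℕ → Matrix (Fin r) (Fin r) ℂ) (m u v : ℕ)
    (huv : u ≤ v) (hvm : v + 1 ≤ m) :
    aGT r a m u = aGT r a m v * aGT r a (v + 1) u := by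
  unfold aGT
  have happ := @List.range'_append (u + 1) (v - u) (m - 1 - v) 1
  rw [show u + 1 + 1 * (v - u) = v + 1 by omega] at happ
  rw [show m - 1 - u = v - u + (m - 1 - v) by omega, ← happ, List.reverse_append,
    List.map_append, List.prod_append, show v + 1 - 1 - u = v - u by omega]

/-- If an `N×N` matrix `B` admits lower Green generators of order `r`,
then `B` is a lower Green matrix of order `r`. -/
theorem lowerGreenGenerators_isLowerGreen (N r : ℕ) (hr : 0 < r) (hNr : r < N)
    (B : Matrix (Fin N) (Fin N) ℂ)
    (p : ℕ → Matrix (Fin 1) (Fin r) ℂ) (q : ℕ → Matrix (Fin r) (Fin 1) ℂ)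
    (a : ℕ → Matrix (Fin r) (Fin r) ℂ) (pLast : Matrix (Fin r) (Fin r) ℂ)
    (hgen : IsLowerGreenGenerators N r hNr p q a pLast B) :
    IsLowerGreen N r B := by
  obtain ⟨h1, h2, h3, h4⟩ := hgen
  intro k hk1 hk2
  set P : Matrix (Fin (N - k + 1)) (Fin r) ℂ := fun i t =>
    if h : k + (i : ℕ) ≤ N - r then
      (p (k + (i : ℕ)) * aGT r a (k + (i : ℕ)) (k - 1)) 0 t
    else
      (pLast * aGT r a (N - r + 1) (k - 1))
        ⟨k - 1 + (i : ℕ) - (N - r), by have := i.isLt; omega⟩ t with hP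
  set Q : Matrix (Fin r) (Fin (k + r - 1)) ℂ := fun t j =>
    if hj : (j : ℕ) < r then (aGT r a k 0) t ⟨(j : ℕ), hj⟩
    else (aGT r a k ((j : ℕ) - r + 1) * q ((j : ℕ) - r + 1)) t 0 with hQ
  have key : (B.submatrix
      (fun i : Fin (N - k + 1) => (⟨k - 1 + (i : ℕ), by have := i.isLt; omega⟩ : Fin N))
      (fun j : Fin (k + r - 1) => (⟨(j : ℕ), by have := j.isLt; omega⟩ : Fin N))) = P * Q := by
    ext i j
    rw [Matrix.mul_apply]
    simp only [Matrix.submatrix_apply, hP, hQ]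
    by_cases hrow : k + (i : ℕ) ≤ N - r
    · by_cases hcol : (j : ℕ) < r
      · -- first generator identity
        have e := h1 (k + (i : ℕ)) (by omega) hrow ⟨(j : ℕ), hcol⟩
        simp only [show k + (i : ℕ) - 1 = k - 1 + (i : ℕ) by omega] at e
        rw [e, aGT_split r a (k + (i : ℕ)) 0 (k - 1) (by omega) (by omega),
          show k - 1 + 1 = k by omega, ← Matrix.mul_assoc, Matrix.mul_apply]
        refine Finset.sum_congr rfl fun t _ => ?_
        rw [dif_pos hrow, dif_pos hcol]
      · set s : ℕ := (j : ℕ) - r + 2 with hs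
        have e := h2 (k + (i : ℕ)) (by omega) hrow s (by omega)
          (by have := j.isLt; omega)
        simp only [show k + (i : ℕ) - 1 = k - 1 + (i : ℕ) by omega,
          show r + s - 2 = (j : ℕ) by omega, show s - 1 = (j : ℕ) - r + 1 by omega] at e
        rw [e, aGT_split r a (k + (i : ℕ)) ((j : ℕ) - r + 1) (k - 1)
          (by have := j.isLt; omega) (by omega),
          show k - 1 + 1 = k by omega, ← Matrix.mul_assoc, Matrix.mul_assoc _ (aGT r a k _),
          Matrix.mul_apply (M := p (k + (i : ℕ)) * aGT r a (k + (i : ℕ)) (k - 1))]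
        refine Finset.sum_congr rfl fun t _ => ?_
        rw [dif_pos hrow, dif_neg hcol]
    · have hge : N - r ≤ k - 1 + (i : ℕ) := by omega
      have hlt : k - 1 + (i : ℕ) - (N - r) < r := by have := i.isLt; omega
      by_cases hcol : (j : ℕ) < r
      · have e := h3 ⟨k - 1 + (i : ℕ) - (N - r), hlt⟩ ⟨(j : ℕ), hcol⟩
        simp only [show N - r + (k - 1 + (i : ℕ) - (N - r)) = k - 1 + (i : ℕ) by omega] at e
        rw [e, aGT_split r a (N - r + 1) 0 (k - 1) (by omega) (by omega),
          show k - 1 + 1 = k by omega, ← Matrix.mul_assoc, Matrix.mul_apply]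
        refine Finset.sum_congr rfl fun t _ => ?_
        rw [dif_neg hrow, dif_pos hcol]
      · set s : ℕ := (j : ℕ) - r + 2 with hs
        have e := h4 ⟨k - 1 + (i : ℕ) - (N - r), hlt⟩ s (by omega)
          (by have := j.isLt; omega)
        simp only [show N - r + (k - 1 + (i : ℕ) - (N - r)) = k - 1 + (i : ℕ) by omega,
          show r + s - 2 = (j : ℕ) by omega, show s - 1 = (j : ℕ) - r + 1 by omega] at e
        rw [e, aGT_split r a (N - r + 1) ((j : ℕ) - r + 1) (k - 1)
          (by have := j.isLt; omega) (by omega),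
          show k - 1 + 1 = k by omega, ← Matrix.mul_assoc, Matrix.mul_assoc _ (aGT r a k _),
          Matrix.mul_apply (M := pLast * aGT r a (N - r + 1) (k - 1))]
        refine Finset.sum_congr rfl fun t _ => ?_
        rw [dif_neg hrow, dif_neg hcol]
  rw [key]
  calc (P * Q).rank ≤ P.rank := Matrix.rank_mul_le_left P Q
    _ ≤ Fintype.card (Fin r) := Matrix.rank_le_card_width P
    _ = r := Fintype.card_fin r
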